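/- Second-best composition distortion (pooling case): let λ ∈ (0,1] and c > 0. Define the first-best objective F(n0,n1) = λ·V_S(n0,n1) + (1−λ)·V_L(n0,n1) − c·(n0+n1) on [0,∞)×[0,∞). Suppose (n0*, n1*) maximizes F over [0,∞)×[0,∞) with n0* > 0 and n1* > 0, and suppose b > 0 is such that (b,b) maximizes V_L(n0,n1) − c·(n0+n1) over [0,∞)×[0,∞). Then n0* < b < n1*. -/

import Mathlib

/-- The denominator `D(n0,n1) = σ²(n0+n1+2 n0 n1) + (1+n0)(1+n1)`. -/
noncomputable def Dden (σ n0 n1 : ℝ) : ℝ :=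
  σ^2 * (n0 + n1 + 2*n0*n1) + (1+n0)*(1+n1)

/-- Forecaster value `V_L`. -/
noncomputable def VL (σ n0 n1 : ℝ) : ℝ :=
  σ^4 * (n0 + n1 + 2*n0*n1) / Dden σ n0 n1

/-- Nowcaster value `V_S`. -/
noncomputable def VS (σ n0 n1 : ℝ) : ℝ :=
  VL σ n0 n1 + (3*σ^2*n0*n1 + 2*σ^2*n1 + n1 + n0*n1) / Dden σ n0 n1

lemma hasDerivAt_n0 (σ lam c n1 x : ℝ) (hD : Dden σ x n1 ≠ 0) :
    HasDerivAt (fun m0 => lam * VS σ m0 n1 + (1-lam) * VL σ m0 n1 - c*(m0+n1))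
      (((σ^4*(1+2*n1) + lam*(n1*(3*σ^2+1))) * Dden σ x n1
        - (σ^4*(x+n1+2*x*n1) + lam*(3*σ^2*x*n1+2*σ^2*n1+n1+x*n1)) * (σ^2*(1+2*n1)+(1+n1)))
        / (Dden σ x n1)^2 - c) x := by
  have hfun : (fun m0 => lam * VS σ m0 n1 + (1-lam) * VL σ m0 n1 - c*(m0+n1))
      = fun m0 => (σ^4*(m0+n1+2*m0*n1) + lam*(3*σ^2*m0*n1+2*σ^2*n1+n1+m0*n1)) / Dden σ m0 n1
          - c*(m0+n1) := by
    funext m0; simp only [VS, VL]; ring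
  rw [hfun]
  have hnum : HasDerivAt (fun m0 : ℝ => σ^4*(m0+n1+2*m0*n1) + lam*(3*σ^2*m0*n1+2*σ^2*n1+n1+m0*n1))
      (σ^4*(1+2*n1) + lam*(n1*(3*σ^2+1))) x := by
    have h1 : (fun m0 : ℝ => σ^4*(m0+n1+2*m0*n1) + lam*(3*σ^2*m0*n1+2*σ^2*n1+n1+m0*n1))
        = fun m0 => (σ^4*(1+2*n1) + lam*(n1*(3*σ^2+1))) * m0 + (σ^4*n1 + lam*(n1*(2*σ^2+1))) := by
      funext m0; ring
    rw [h1]; simpa using ((hasDerivAt_id x).const_mul (σ^4*(1+2*n1) + lam*(n1*(3*σ^2+1)))).add_const (σ^4*n1 + lam*(n1*(2*σ^2+1)))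
  have hden : HasDerivAt (fun m0 : ℝ => Dden σ m0 n1) (σ^2*(1+2*n1)+(1+n1)) x := by
    have h1 : (fun m0 : ℝ => Dden σ m0 n1)
        = fun m0 => (σ^2*(1+2*n1)+(1+n1)) * m0 + (σ^2*n1 + (1+n1)) := by
      funext m0; simp only [Dden]; ring
    rw [h1]; simpa using ((hasDerivAt_id x).const_mul (σ^2*(1+2*n1)+(1+n1))).add_const (σ^2*n1 + (1+n1))
  have hc : HasDerivAt (fun m0 : ℝ => c*(m0+n1)) c x := by
    have h1 : (fun m0 : ℝ => c*(m0+n1)) = fun m0 => c * m0 + c*n1 := by funext m0; ring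
    rw [h1]; simpa using ((hasDerivAt_id x).const_mul c).add_const (c*n1)
  exact (hnum.div hden hD).sub hc

lemma hasDerivAt_n1 (σ lam c n0 x : ℝ) (hD : Dden σ n0 x ≠ 0) :
    HasDerivAt (fun m1 => lam * VS σ n0 m1 + (1-lam) * VL σ n0 m1 - c*(n0+m1))
      (((σ^4*(1+2*n0) + lam*(3*σ^2*n0+2*σ^2+1+n0)) * Dden σ n0 x
        - (σ^4*(n0+x+2*n0*x) + lam*(3*σ^2*n0*x+2*σ^2*x+x+n0*x)) * (σ^2*(1+2*n0)+(1+n0)))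
        / (Dden σ n0 x)^2 - c) x := by
  have hfun : (fun m1 => lam * VS σ n0 m1 + (1-lam) * VL σ n0 m1 - c*(n0+m1))
      = fun m1 => (σ^4*(n0+m1+2*n0*m1) + lam*(3*σ^2*n0*m1+2*σ^2*m1+m1+n0*m1)) / Dden σ n0 m1
          - c*(n0+m1) := by
    funext m1; simp only [VS, VL]; ring
  rw [hfun]
  have hnum : HasDerivAt (fun m1 : ℝ => σ^4*(n0+m1+2*n0*m1) + lam*(3*σ^2*n0*m1+2*σ^2*m1+m1+n0*m1))
      (σ^4*(1+2*n0) + lam*(3*σ^2*n0+2*σ^2+1+n0)) x := by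
    have h1 : (fun m1 : ℝ => σ^4*(n0+m1+2*n0*m1) + lam*(3*σ^2*n0*m1+2*σ^2*m1+m1+n0*m1))
        = fun m1 => (σ^4*(1+2*n0) + lam*(3*σ^2*n0+2*σ^2+1+n0)) * m1 + σ^4*n0 := by
      funext m1; ring
    rw [h1]; simpa using ((hasDerivAt_id x).const_mul (σ^4*(1+2*n0) + lam*(3*σ^2*n0+2*σ^2+1+n0))).add_const (σ^4*n0)
  have hden : HasDerivAt (fun m1 : ℝ => Dden σ n0 m1) (σ^2*(1+2*n0)+(1+n0)) x := by
    have h1 : (fun m1 : ℝ => Dden σ n0 m1)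
        = fun m1 => (σ^2*(1+2*n0)+(1+n0)) * m1 + (σ^2*n0 + (1+n0)) := by
      funext m1; simp only [Dden]; ring
    rw [h1]; simpa using ((hasDerivAt_id x).const_mul (σ^2*(1+2*n0)+(1+n0))).add_const (σ^2*n0 + (1+n0))
  have hc : HasDerivAt (fun m1 : ℝ => c*(n0+m1)) c x := by
    have h1 : (fun m1 : ℝ => c*(n0+m1)) = fun m1 => c * m1 + c*n0 := by funext m1; ring
    rw [h1]; simpa using ((hasDerivAt_id x).const_mul c).add_const (c*n0)
  exact (hnum.div hden hD).sub hc


set_option maxHeartbeats 2000000 in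
/-- Second-best composition distortion (pooling case): if `(b,b)` maximizes the
pooling objective and `(n0*,n1*)` is an interior first best, then `n0* < b < n1*`. -/
theorem stmt17 (σ lam c : ℝ) (hσ : 0 < σ) (hl0 : 0 < lam) (hl1 : lam ≤ 1) (hc : 0 < c)
    (n0s n1s b : ℝ) (hs0 : 0 < n0s) (hs1 : 0 < n1s) (hb : 0 < b)
    (hF : ∀ m0 m1 : ℝ, 0 ≤ m0 → 0 ≤ m1 →
      lam * VS σ m0 m1 + (1-lam) * VL σ m0 m1 - c*(m0+m1) ≤
      lam * VS σ n0s n1s + (1-lam) * VL σ n0s n1s - c*(n0s+n1s))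
    (hP : ∀ m0 m1 : ℝ, 0 ≤ m0 → 0 ≤ m1 →
      VL σ m0 m1 - c*(m0+m1) ≤ VL σ b b - c*(b+b)) :
    n0s < b ∧ b < n1s := by
  have hσ2 : 0 < σ^2 := by positivity
  have hDpos : ∀ x y : ℝ, 0 ≤ x → 0 ≤ y → 0 < Dden σ x y := by
    intro x y hx hy
    have h1 : 0 ≤ σ^2 * (x + y + 2*x*y) := by positivity
    have h2 : 0 < (1+x)*(1+y) := by positivity
    simp only [Dden]; linarith
  have hD0 : 0 < Dden σ n0s n1s := hDpos _ _ hs0.le hs1.le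
  have hDb : 0 < Dden σ b b := hDpos _ _ hb.le hb.le
  -- FOC in n0 at (n0s, n1s)
  have hloc0 : IsLocalMax (fun m0 => lam * VS σ m0 n1s + (1-lam) * VL σ m0 n1s - c*(m0+n1s)) n0s := by
    filter_upwards [Ioi_mem_nhds hs0] with x hx
    exact hF x n1s (le_of_lt hx) hs1.le
  have hd0 := hasDerivAt_n0 σ lam c n1s n0s hD0.ne'
  have hz0 : ((σ^4*(1+2*n1s) + lam*(n1s*(3*σ^2+1))) * Dden σ n0s n1s
        - (σ^4*(n0s+n1s+2*n0s*n1s) + lam*(3*σ^2*n0s*n1s+2*σ^2*n1s+n1s+n0s*n1s)) * (σ^2*(1+2*n1s)+(1+n1s)))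
        / (Dden σ n0s n1s)^2 - c = 0 := by
    rw [← hd0.deriv]; exact hloc0.deriv_eq_zero
  have hA : σ^4*(1+n1s)^2 - lam*(σ^4*n1s*(2+n1s)) = c * (Dden σ n0s n1s)^2 := by
    field_simp at hz0
    simp only [Dden] at hz0 ⊢
    linear_combination hz0
  -- FOC in n1 at (n0s, n1s)
  have hloc1 : IsLocalMax (fun m1 => lam * VS σ n0s m1 + (1-lam) * VL σ n0s m1 - c*(n0s+m1)) n1s := by
    filter_upwards [Ioi_mem_nhds hs1] with x hx
    exact hF n0s x hs0.le (le_of_lt hx)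
  have hd1 := hasDerivAt_n1 σ lam c n0s n1s hD0.ne'
  have hz1 : ((σ^4*(1+2*n0s) + lam*(3*σ^2*n0s+2*σ^2+1+n0s)) * Dden σ n0s n1s
        - (σ^4*(n0s+n1s+2*n0s*n1s) + lam*(3*σ^2*n0s*n1s+2*σ^2*n1s+n1s+n0s*n1s)) * (σ^2*(1+2*n0s)+(1+n0s)))
        / (Dden σ n0s n1s)^2 - c = 0 := by
    rw [← hd1.deriv]; exact hloc1.deriv_eq_zero
  have hB : σ^4*(1+n0s)^2 + lam*(((3*σ^2+1)*n0s+2*σ^2+1)*(σ^2*n0s+1+n0s)) = c * (Dden σ n0s n1s)^2 := by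
    field_simp at hz1
    simp only [Dden] at hz1 ⊢
    linear_combination hz1
  -- FOC at (b,b) for pooling objective
  have hlocb : IsLocalMax (fun m0 => (0:ℝ) * VS σ m0 b + (1-0) * VL σ m0 b - c*(m0+b)) b := by
    filter_upwards [Ioi_mem_nhds hb] with x hx
    have := hP x b (le_of_lt hx) hb.le
    simp only [zero_mul, zero_add, sub_zero, one_mul]
    linarith
  have hdb := hasDerivAt_n0 σ 0 c b b hDb.ne'
  have hzb : ((σ^4*(1+2*b) + 0*(b*(3*σ^2+1))) * Dden σ b b
        - (σ^4*(b+b+2*b*b) + 0*(3*σ^2*b*b+2*σ^2*b+b+b*b)) * (σ^2*(1+2*b)+(1+b)))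
        / (Dden σ b b)^2 - c = 0 := by
    rw [← hdb.deriv]; exact hlocb.deriv_eq_zero
  have hC : σ^4*(1+b)^2 = c * (Dden σ b b)^2 := by
    field_simp at hzb
    simp only [Dden] at hzb ⊢
    linear_combination hzb
  -- n0s < n1s
  have h4 : (0:ℝ) < σ^4 := by positivity
  have hQpos : 0 < ((3*σ^2+1)*n0s+2*σ^2+1)*(σ^2*n0s+1+n0s) := by positivity
  have h01 : n0s < n1s := by
    by_contra hge
    push_neg at hge
    have hsq : σ^4*(1+n1s)^2 ≤ σ^4*(1+n0s)^2 := by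
      nlinarith [mul_nonneg (mul_nonneg h4.le (by linarith : (0:ℝ) ≤ n0s - n1s))
        (by linarith : (0:ℝ) ≤ 2 + n0s + n1s)]
    have hp1 : 0 < lam*(σ^4*n1s*(2+n1s)) := by positivity
    have hp2 : 0 < lam*(((3*σ^2+1)*n0s+2*σ^2+1)*(σ^2*n0s+1+n0s)) := mul_pos hl0 hQpos
    linarith [hA, hB]
  -- sqrt c facts
  set s := Real.sqrt c with hsdef
  have hs2 : s^2 = c := Real.sq_sqrt hc.le
  have hspos : 0 < s := Real.sqrt_pos.mpr hc
  have hfact : (s * Dden σ b b - σ^2*(1+b)) * (s * Dden σ b b + σ^2*(1+b)) = 0 := by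
    linear_combination (Dden σ b b)^2 * hs2 - hC
  have hsum : 0 < s * Dden σ b b + σ^2*(1+b) := by positivity
  have hsDb : s * Dden σ b b = σ^2*(1+b) := by
    rcases mul_eq_zero.mp hfact with h | h
    · linarith
    · linarith
  have hkey : s * (1+b+2*σ^2*b) = σ^2 := by
    have h1b : (1+b) ≠ 0 := by positivity
    have h2 : (s * (1+b+2*σ^2*b)) * (1+b) = σ^2 * (1+b) := by
      simp only [Dden] at hsDb; linear_combination hsDb
    exact mul_right_cancel₀ h1b h2
  -- b < n1s
  have hbn1 : b < n1s := by
    by_contra hcon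
    push_neg at hcon   -- n1s ≤ b
    have hmono : Dden σ n0s n1s ≤ Dden σ n0s b := by
      simp only [Dden]
      nlinarith [mul_nonneg (mul_nonneg hσ2.le (by linarith : (0:ℝ) ≤ b - n1s))
        (by linarith : (0:ℝ) ≤ 1 + 2*n0s),
        mul_nonneg (by linarith : (0:ℝ) ≤ 1 + n0s) (by linarith : (0:ℝ) ≤ b - n1s)]
    have hident : s * Dden σ n0s b = σ^2*(1+n0s) + s*σ^2*(n0s - b) := by
      simp only [Dden]; linear_combination (1+n0s) * hkey
    have hDnb : 0 < Dden σ n0s b := hDpos _ _ hs0.le hb.le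
    set Dnb := Dden σ n0s b with hDnbdef
    set D0 := Dden σ n0s n1s with hD0def
    have hsq2 : D0^2 ≤ Dnb^2 := pow_le_pow_left₀ hD0.le hmono 2
    have hgt : (σ^2*(1+n0s))^2 < (s * Dnb)^2 := by
      have e1 : (s*Dnb)^2 = c * Dnb^2 := by rw [mul_pow, hs2]
      have e2 : (σ^2*(1+n0s))^2 = σ^4*(1+n0s)^2 := by ring
      have hp2 : 0 < lam*(((3*σ^2+1)*n0s+2*σ^2+1)*(σ^2*n0s+1+n0s)) := mul_pos hl0 hQpos
      have : c * D0^2 ≤ c * Dnb^2 := mul_le_mul_of_nonneg_left hsq2 hc.le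
      linarith [hB]
    have hineq : σ^2*(1+n0s) < s * Dnb :=
      lt_of_pow_lt_pow_left₀ 2 (by positivity) hgt
    have hfin : b < n0s := by nlinarith [mul_pos hspos hσ2]
    linarith
  refine ⟨?_, hbn1⟩
  -- n0s < b
  by_contra hcon
  push_neg at hcon  -- b ≤ n0s
  have hmono : Dden σ b n1s ≤ Dden σ n0s n1s := by
    simp only [Dden]
    nlinarith [mul_nonneg (mul_nonneg hσ2.le (by linarith : (0:ℝ) ≤ n0s - b))
      (by linarith : (0:ℝ) ≤ 1 + 2*n1s),
      mul_nonneg (by linarith : (0:ℝ) ≤ 1 + n1s) (by linarith : (0:ℝ) ≤ n0s - b)]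
  have hident : s * Dden σ b n1s = σ^2*(1+n1s) + s*σ^2*(n1s - b) := by
    simp only [Dden]; linear_combination (1+n1s) * hkey
  have hDbn : 0 < Dden σ b n1s := hDpos _ _ hb.le hs1.le
  set Dbn := Dden σ b n1s with hDbndef
  set D0 := Dden σ n0s n1s with hD0def
  have hsq2 : Dbn^2 ≤ D0^2 := pow_le_pow_left₀ hDbn.le hmono 2
  have hlt : (s * Dbn)^2 < (σ^2*(1+n1s))^2 := by
    have e1 : (s*Dbn)^2 = c * Dbn^2 := by rw [mul_pow, hs2]
    have e2 : (σ^2*(1+n1s))^2 = σ^4*(1+n1s)^2 := by ring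
    have hp1 : 0 < lam*(σ^4*n1s*(2+n1s)) := by positivity
    have : c * Dbn^2 ≤ c * D0^2 := mul_le_mul_of_nonneg_left hsq2 hc.le
    linarith [hA]
  have hineq : s * Dbn < σ^2*(1+n1s) := by
    have h0 : 0 ≤ σ^2*(1+n1s) := by positivity
    exact lt_of_pow_lt_pow_left₀ 2 h0 hlt
  have hfin : n1s < b := by nlinarith [mul_pos hspos hσ2]
  linarith
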